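/- Let S be a substring-free set of strings over the DNA alphabet and consider an execution of MGREEDY-RC on S, producing the set T whose elements are the strings ⟨s'_{i1},…,s'_{ir}⟩ corresponding to the cycles C = s'_{i1},…,s'_{ir},s'_{i1} it closes. Suppose that for each such cycle C there is an index j (1 ≤ j ≤ r) and a string x_C such that ⟨s'_{i(j+1)},…,s'_{ir},s'_{i1},…,s'_{ij}⟩ is a suffix of x_C. Then ||T|| ≤ ||A||, where ||T|| = Σ_C |⟨s'_{i1},…,s'_{ir}⟩| and ||A|| = Σ_C |x_C|. -/

import Mathlib

/-- The DNA alphabet. -/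
inductive DNA : Type
  | A | T | G | C
  deriving DecidableEq, Repr

/-- Complement of a DNA base: a↔t, g↔c. -/
def DNA.compl : DNA → DNA
  | .A => .T
  | .T => .A
  | .G => .C
  | .C => .G

/-- Strings over the DNA alphabet. -/
abbrev Str : Type := List DNA

/-- Reverse complement of a string. -/
def rc (s : Str) : Str := (s.map DNA.compl).reverse

/-- An approximate solution for the SCS-RC instance `S`: a string containing,
for each `s ∈ S`, either `s` or its reverse complement as a substring. -/
def ApproxSol (S : Finset Str) (u : Str) : Prop :=
  ∀ s ∈ S, s <:+: u ∨ rc s <:+: u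

/-- `OPT S` is the minimum length of an approximate solution for the SCS-RC instance `S`. -/
noncomputable def OPT (S : Finset Str) : ℕ :=
  sInf {n | ∃ u : Str, ApproxSol S u ∧ u.length = n}

/-- `S` is substring-free: no string of `S ∪ S̄^R` is a substring of another. -/
def SubstrFree (S : Finset Str) : Prop :=
  ∀ x, (x ∈ S ∨ rc x ∈ S) → ∀ y, (y ∈ S ∨ rc y ∈ S) → x ≠ y → ¬ x <:+: y

/-- `ov x y`: the length of the longest string `v` such that `x = u ++ v` and
`y = v ++ w` for nonempty `u`, `w`. -/
noncomputable def ov (x y : Str) : ℕ :=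
  sSup {k | ∃ v : Str, v.length = k ∧ (∃ u : Str, u ≠ [] ∧ x = u ++ v) ∧
        (∃ w : Str, w ≠ [] ∧ y = v ++ w)}

/-- `prefStr x y = pref(x, y)`: the prefix of `x` with respect to `y`. -/
noncomputable def prefStr (x y : Str) : Str := x.take (x.length - ov x y)

/-- `distStr x y = dist(x, y) = |x| - ov(x, y)`. -/
noncomputable def distStr (x y : Str) : ℕ := x.length - ov x y

/-- The merge `⟨x, y⟩ = pref(x, y) ++ y`. -/
noncomputable def mergeStr (x y : Str) : Str := prefStr x y ++ y

/-- `superstr [x1, …, xr] = ⟨x1, …, xr⟩ = pref(x1,x2) ⋯ pref(x_{r-1},x_r) ++ x_r`. -/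
noncomputable def superstr : List Str → Str
  | [] => []
  | [x] => x
  | x :: y :: rest => prefStr x y ++ superstr (y :: rest)

/-- `‖S‖`: the total length of the strings of the finite set `S`. -/
def normS (S : Finset Str) : ℕ := ∑ s ∈ S, s.length

/-- Pairs `(x, y)` of strings from the collection `S` or their reverse complements,
with `x = y`, or with `x ≠ y` and `rc x ≠ y`, as considered by MGREEDY-RC. -/
def ValidPair (S : Finset Str) (x y : Str) : Prop :=
  (x ∈ S ∨ rc x ∈ S) ∧ (y ∈ S ∨ rc y ∈ S) ∧ (x = y ∨ (x ≠ y ∧ rc x ≠ y))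

/-- `MGreedyExec S T`: some execution of MGREEDY-RC starting from the collection `S`
(under some tie-breaking among pairs of maximum overlap) produces the set `T`. -/
inductive MGreedyExec : Finset Str → Finset Str → Prop
  | done : MGreedyExec ∅ ∅
  | close (S T : Finset Str) (x : Str)
      (hx : x ∈ S ∨ rc x ∈ S)
      (hmax : ∀ a b, ValidPair S a b → ov a b ≤ ov x x)
      (h : MGreedyExec (S \ {x, rc x}) T) :
      MGreedyExec S (insert x T)
  | merge (S T : Finset Str) (x y : Str)
      (hx : x ∈ S ∨ rc x ∈ S) (hy : y ∈ S ∨ rc y ∈ S)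
      (hne : x ≠ y) (hrc : rc x ≠ y)
      (hmax : ∀ a b, ValidPair S a b → ov a b ≤ ov x y)
      (h : MGreedyExec (insert (mergeStr x y) (S \ {x, rc x, y, rc y})) T) :
      MGreedyExec S T

/-- `GreedyExec S u`: some execution of GREEDY-RC starting from the collection `S`
(under some tie-breaking among pairs of maximum overlap) outputs the string `u`. -/
inductive GreedyExec : Finset Str → Str → Prop
  | single (x : Str) : GreedyExec {x} x
  | merge (S : Finset Str) (u x y : Str)
      (hx : x ∈ S ∨ rc x ∈ S) (hy : y ∈ S ∨ rc y ∈ S)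
      (hne : x ≠ y) (hrc : rc x ≠ y)
      (hmax : ∀ a b, (a ∈ S ∨ rc a ∈ S) → (b ∈ S ∨ rc b ∈ S) → a ≠ b → rc a ≠ b →
        ov a b ≤ ov x y)
      (hcard : 1 < S.card)
      (h : GreedyExec (insert (mergeStr x y) (S \ {x, rc x, y, rc y})) u) :
      GreedyExec S u

/-- Reverse complement of a path: the path of the reverse complements, reversed. -/
def rcPath (p : List Str) : List Str := (p.map rc).reverse

/-- Valid pairs for the path-level description of MGREEDY-RC, where each collection
element is the path of original strings composing it, its string value being `superstr`. -/
def ValidPairP (P : Finset (List Str)) (p q : List Str) : Prop :=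
  (p ∈ P ∨ rcPath p ∈ P) ∧ (q ∈ P ∨ rcPath q ∈ P) ∧
  (superstr p = superstr q ∨ (superstr p ≠ superstr q ∧ rc (superstr p) ≠ superstr q))

/-- `MGreedyCyc P C`: the path-level description of an execution of MGREEDY-RC.
Starting from the collection of paths `P`, merging the paths `p` and `q` (adding the
edge from the last vertex of `p` to the first of `q`) when the corresponding strings
are merged, and closing the path `p` into the cycle `p` (with the edge from its last
vertex to its first) when the corresponding string is moved to `T`, some execution
produces the set of closed cycles `C`. -/
inductive MGreedyCyc : Finset (List Str) → Finset (List Str) → Prop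
  | done : MGreedyCyc ∅ ∅
  | close (P C : Finset (List Str)) (p : List Str)
      (hp : p ∈ P ∨ rcPath p ∈ P)
      (hmax : ∀ q₁ q₂, ValidPairP P q₁ q₂ →
        ov (superstr q₁) (superstr q₂) ≤ ov (superstr p) (superstr p))
      (h : MGreedyCyc (P \ {p, rcPath p}) C) :
      MGreedyCyc P (insert p C)
  | merge (P C : Finset (List Str)) (p q : List Str)
      (hp : p ∈ P ∨ rcPath p ∈ P) (hq : q ∈ P ∨ rcPath q ∈ P)
      (hne : superstr p ≠ superstr q) (hrc : rc (superstr p) ≠ superstr q)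
      (hmax : ∀ q₁ q₂, ValidPairP P q₁ q₂ →
        ov (superstr q₁) (superstr q₂) ≤ ov (superstr p) (superstr q))
      (h : MGreedyCyc (insert (p ++ q) (P \ {p, rcPath p, q, rcPath q})) C) :
      MGreedyCyc P C

/-- The weight of the cycle `x1, …, xr, x1` given by the list `[x1, …, xr]`:
`Σ_{i=1}^{r} dist(x_i, x_{i+1})` with indices modulo `r`. -/
noncomputable def cycleWeight (c : List Str) : ℕ :=
  ((c.zip (c.rotate 1)).map fun p => distStr p.1 p.2).sum

/-- `C` is a cycle cover of the distance graph `G_S`: a set of vertex-disjoint cycles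
on vertices of `S ∪ S̄^R` such that for each `s ∈ S` exactly one of `s` and `rc s`
is contained in the cycles. -/
def IsCycleCover (S : Finset Str) (C : Finset (List Str)) : Prop :=
  (∀ c ∈ C, c ≠ []) ∧
  (∀ c ∈ C, c.Nodup) ∧
  (∀ c ∈ C, ∀ d ∈ C, c ≠ d → ∀ x ∈ c, x ∉ d) ∧
  (∀ c ∈ C, ∀ x ∈ c, x ∈ S ∨ rc x ∈ S) ∧
  (∀ s ∈ S, Xor' (∃ c ∈ C, s ∈ c) (∃ c ∈ C, rc s ∈ c))

/-- The total weight of a cycle cover. -/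
noncomputable def coverWeight (C : Finset (List Str)) : ℕ := ∑ c ∈ C, cycleWeight c

/-- `minCoverWeight S = w(CYC(G_S))`: the minimum total weight of a cycle cover of `G_S`. -/
noncomputable def minCoverWeight (S : Finset Str) : ℕ :=
  sInf {n | ∃ C : Finset (List Str), IsCycleCover S C ∧ coverWeight C = n}

/-- `x` is a factor of `s`: `s = x^i ++ y` for some `i ≥ 1` and some prefix `y` of `x`. -/
def IsFactor (x s : Str) : Prop :=
  x ≠ [] ∧ ∃ i : ℕ, 1 ≤ i ∧ ∃ y : Str, y <+: x ∧ s = (List.replicate i x).flatten ++ y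

/-- `period s`: the length of the shortest factor of `s`. -/
noncomputable def periodStr (s : Str) : ℕ :=
  sInf {k | ∃ x : Str, IsFactor x s ∧ x.length = k}

open Classical in
/-- `factorStr s`: a shortest factor of `s`. -/
noncomputable def factorStr (s : Str) : Str :=
  if h : ∃ x : Str, IsFactor x s ∧ x.length = periodStr s then h.choose else []

/-- Two strings are equivalent if the factor of one is a cyclic shift of the factor
of the other. -/
def EquivStr (x y : Str) : Prop :=
  ∃ e f : Str, factorStr x = e ++ f ∧ factorStr y = f ++ e

open List

-- ### rc lemmas

@[simp] lemma DNA.compl_compl (a : DNA) : a.compl.compl = a := by cases a <;> rfl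

@[simp] lemma rc_rc (s : Str) : rc (rc s) = s := by
  simp only [rc, List.map_reverse, List.reverse_reverse, List.map_map]
  have : DNA.compl ∘ DNA.compl = id := by funext a; simp
  simp [this]

@[simp] lemma rc_nil : rc ([] : Str) = [] := rfl

@[simp] lemma rc_length (s : Str) : (rc s).length = s.length := by simp [rc]

lemma rc_append (a b : Str) : rc (a ++ b) = rc b ++ rc a := by simp [rc]

lemma rc_eq_nil_iff {s : Str} : rc s = [] ↔ s = [] := by
  constructor
  · intro h; have := congrArg List.length h; simpa using this
  · rintro rfl; rfl

lemma rc_inj {a b : Str} (h : rc a = rc b) : a = b := by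
  have := congrArg rc h; simpa using this

lemma rc_prefix {a b : Str} (h : a <+: b) : rc a <:+ rc b := by
  obtain ⟨t, rfl⟩ := h
  exact ⟨rc t, (rc_append a t).symm⟩

lemma rc_suffix {a b : Str} (h : a <:+ b) : rc a <+: rc b := by
  obtain ⟨t, rfl⟩ := h
  exact ⟨rc t, (rc_append t a).symm⟩

lemma rc_infix {a b : Str} (h : a <:+: b) : rc a <:+: rc b := by
  obtain ⟨s, t, rfl⟩ := h
  refine ⟨rc t, rc s, ?_⟩
  rw [rc_append, rc_append]; simp [List.append_assoc]

-- ### ov lemmas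

def ovSet (x y : Str) : Set ℕ :=
  {k | ∃ v : Str, v.length = k ∧ (∃ u : Str, u ≠ [] ∧ x = u ++ v) ∧
        (∃ w : Str, w ≠ [] ∧ y = v ++ w)}

lemma ov_eq_sSup (x y : Str) : ov x y = sSup (ovSet x y) := rfl

lemma mem_ovSet_lt_left {x y : Str} {k : ℕ} (h : k ∈ ovSet x y) : k < x.length := by
  obtain ⟨v, hv, ⟨u, hu, rfl⟩, -⟩ := h
  have : 0 < u.length := List.length_pos_iff.2 hu
  simp [← hv]; omega

lemma mem_ovSet_lt_right {x y : Str} {k : ℕ} (h : k ∈ ovSet x y) : k < y.length := by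
  obtain ⟨v, hv, -, ⟨w, hw, rfl⟩⟩ := h
  have : 0 < w.length := List.length_pos_iff.2 hw
  simp [← hv]; omega

lemma ovSet_bddAbove (x y : Str) : BddAbove (ovSet x y) :=
  ⟨x.length, fun k hk => (mem_ovSet_lt_left hk).le⟩

lemma ov_le_left (x y : Str) : ov x y ≤ x.length := by
  rw [ov_eq_sSup]
  rcases Set.eq_empty_or_nonempty (ovSet x y) with h | h
  · simp [h, csSup_empty]
  · exact csSup_le h fun k hk => (mem_ovSet_lt_left hk).le

lemma ov_le_right (x y : Str) : ov x y ≤ y.length := by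
  rw [ov_eq_sSup]
  rcases Set.eq_empty_or_nonempty (ovSet x y) with h | h
  · simp [h, csSup_empty]
  · exact csSup_le h fun k hk => (mem_ovSet_lt_right hk).le

lemma prefix_append_of_prefix {d s : Str} (a : Str) (h : d <+: s) : a ++ d <+: a ++ s := by
  obtain ⟨t, rfl⟩ := h
  exact ⟨t, by simp⟩

lemma le_ov {x y v : Str} (h1 : v <:+ x) (h2 : v <+: y)
    (h3 : v.length < x.length) (h4 : v.length < y.length) : v.length ≤ ov x y := by
  obtain ⟨u, rfl⟩ := h1
  obtain ⟨w, rfl⟩ := h2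
  refine le_csSup (ovSet_bddAbove _ _) ⟨v, rfl, ⟨u, ?_, rfl⟩, ⟨w, ?_, rfl⟩⟩
  · rintro rfl; simp at h3
  · rintro rfl; simp at h4

lemma ov_spec {x y : Str} (hx : x ≠ []) (hy : y ≠ []) :
    ∃ v : Str, v.length = ov x y ∧ v <:+ x ∧ v <+: y ∧
      v.length < x.length ∧ v.length < y.length := by
  have hne : (ovSet x y).Nonempty := ⟨0, [], rfl, ⟨x, hx, by simp⟩, ⟨y, hy, by simp⟩⟩
  have hmem : ov x y ∈ ovSet x y := Nat.sSup_mem hne (ovSet_bddAbove x y)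
  obtain ⟨v, hv, ⟨u, hu, rfl⟩, ⟨w, hw, rfl⟩⟩ := hmem
  exact ⟨v, hv, ⟨u, rfl⟩, ⟨w, rfl⟩, by
    have : 0 < u.length := List.length_pos_iff.2 hu; simp [hv]; omega, by
    have : 0 < w.length := List.length_pos_iff.2 hw; simp [hv]; omega⟩

lemma ov_nil_left (y : Str) : ov ([] : Str) y = 0 := by
  rw [ov_eq_sSup]
  have : ovSet ([] : Str) y = ∅ := by
    ext k; simp only [Set.mem_empty_iff_false, iff_false, ovSet, Set.mem_setOf_eq]
    rintro ⟨v, hv, ⟨u, hu, h⟩, -⟩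
    have := congrArg List.length h
    simp at this
    exact hu (List.eq_nil_of_length_eq_zero (by omega))
  simp [this, csSup_empty]

lemma ov_nil_right (x : Str) : ov x ([] : Str) = 0 := by
  rw [ov_eq_sSup]
  have : ovSet x ([] : Str) = ∅ := by
    ext k; simp only [Set.mem_empty_iff_false, iff_false, ovSet, Set.mem_setOf_eq]
    rintro ⟨v, hv, -, ⟨w, hw, h⟩⟩
    have := congrArg List.length h
    simp at this
    exact hw (List.eq_nil_of_length_eq_zero (by omega))
  simp [this, csSup_empty]

lemma ovSet_rc (x y : Str) : ovSet (rc y) (rc x) = ovSet x y := by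
  ext k
  constructor
  · rintro ⟨v, hv, ⟨u, hu, h1⟩, ⟨w, hw, h2⟩⟩
    have h1' : x = rc w ++ rc v := by
      have := congrArg rc h2; rwa [rc_rc, rc_append] at this
    have h2' : y = rc v ++ rc u := by
      have := congrArg rc h1; rwa [rc_rc, rc_append] at this
    refine ⟨rc v, by simp [hv], ⟨rc w, ?_, h1'⟩, ⟨rc u, ?_, h2'⟩⟩
    · simpa [rc_eq_nil_iff] using hw
    · simpa [rc_eq_nil_iff] using hu
  · rintro ⟨v, hv, ⟨u, hu, h1⟩, ⟨w, hw, h2⟩⟩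
    refine ⟨rc v, by simp [hv], ⟨rc w, ?_, ?_⟩, ⟨rc u, ?_, ?_⟩⟩
    · simpa [rc_eq_nil_iff] using hw
    · rw [h2, rc_append]
    · simpa [rc_eq_nil_iff] using hu
    · rw [h1, rc_append]

lemma ov_rc (x y : Str) : ov (rc y) (rc x) = ov x y := by
  rw [ov_eq_sSup, ov_eq_sSup, ovSet_rc]

lemma ov_mono {a b x y : Str} (ha : a <:+ x) (hb : b <+: y) (ha' : a ≠ []) (hb' : b ≠ []) :
    ov a b ≤ ov x y := by
  obtain ⟨v, hv, h1, h2, h3, h4⟩ := ov_spec ha' hb'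
  rw [← hv]
  exact le_ov (h1.trans ha) (h2.trans hb)
    (lt_of_lt_of_le h3 ha.length_le) (lt_of_lt_of_le h4 hb.length_le)


-- ### headI/getLastD helpers

def hdS (z : List Str) : Str := z.headI
def lsS (z : List Str) : Str := z.getLastD []

@[simp] lemma hdS_nil : hdS [] = [] := rfl
@[simp] lemma hdS_cons (a : Str) (l : List Str) : hdS (a :: l) = a := rfl
@[simp] lemma lsS_nil : lsS [] = [] := rfl
@[simp] lemma lsS_cons_cons (a b : Str) (l : List Str) : lsS (a :: b :: l) = lsS (b :: l) := rfl
@[simp] lemma lsS_singleton (a : Str) : lsS [a] = a := rfl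

lemma lsS_cons_ne {t : List Str} (a : Str) (h : t ≠ []) : lsS (a :: t) = lsS t := by
  cases t with
  | nil => exact absurd rfl h
  | cons b m => rfl

lemma lsS_append {z₁ z₂ : List Str} (h : z₂ ≠ []) : lsS (z₁ ++ z₂) = lsS z₂ := by
  induction z₁ with
  | nil => simp
  | cons a l ih =>
    rw [List.cons_append, lsS_cons_ne a (by simp [h]), ih]

lemma hdS_append {z₁ z₂ : List Str} (h : z₁ ≠ []) : hdS (z₁ ++ z₂) = hdS z₁ := by
  cases z₁ with
  | nil => exact absurd rfl h
  | cons a l => rfl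

lemma hdS_mem {z : List Str} (h : z ≠ []) : hdS z ∈ z := by
  cases z with
  | nil => exact absurd rfl h
  | cons a l => exact List.mem_cons_self

lemma lsS_mem {z : List Str} (h : z ≠ []) : lsS z ∈ z := by
  induction z with
  | nil => exact absurd rfl h
  | cons a l ih =>
    cases l with
    | nil => simp
    | cons b m => simpa using Or.inr (ih (by simp))

-- ### superstr equations

@[simp] lemma superstr_nil : superstr [] = [] := rfl
@[simp] lemma superstr_singleton (x : Str) : superstr [x] = x := rfl
lemma superstr_cons_cons (x y : Str) (r : List Str) :
    superstr (x :: y :: r) = prefStr x y ++ superstr (y :: r) := rfl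

lemma prefStr_length (x y : Str) : (prefStr x y).length = x.length - ov x y := by
  simp [prefStr]

lemma drop_ov_prefix (x y : Str) : x.drop (x.length - ov x y) <+: y := by
  rcases eq_or_ne x [] with rfl | hx
  · simp
  rcases eq_or_ne y [] with rfl | hy
  · simp [ov_nil_right]
  obtain ⟨v, hv, hsuf, hpre, -, -⟩ := ov_spec hx hy
  rw [List.suffix_iff_eq_drop, hv] at hsuf
  rw [← hsuf]; exact hpre

lemma prefStr_append_drop (x y : Str) : prefStr x y ++ x.drop (x.length - ov x y) = x := by
  simp [prefStr, List.take_append_drop]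

lemma drop_ov_eq_take {x y : Str} (hx : x ≠ []) (hy : y ≠ []) :
    x.drop (x.length - ov x y) = y.take (ov x y) := by
  obtain ⟨v, hv, hsuf, hpre, -, -⟩ := ov_spec hx hy
  have h1 : x.drop (x.length - ov x y) = v := by
    rw [List.suffix_iff_eq_drop, hv] at hsuf
    exact hsuf.symm
  have h2 : v = y.take (ov x y) := by
    rw [List.prefix_iff_eq_take] at hpre
    rw [← hv]; exact hpre
  rw [h1, h2]

lemma hdS_prefix (z : List Str) : hdS z <+: superstr z := by
  induction z with
  | nil => simp
  | cons a l ih =>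
    cases l with
    | nil => simp
    | cons b m =>
      rw [superstr_cons_cons, hdS_cons]
      have h1 : a = prefStr a b ++ a.drop (a.length - ov a b) := (prefStr_append_drop a b).symm
      have h2 : a.drop (a.length - ov a b) <+: superstr (b :: m) :=
        (drop_ov_prefix a b).trans (by simpa using ih)
      conv_lhs => rw [h1]
      exact prefix_append_of_prefix _ h2

lemma lsS_suffix (z : List Str) : lsS z <:+ superstr z := by
  induction z with
  | nil => simp
  | cons a l ih =>
    cases l with
    | nil => simp
    | cons b m =>
      rw [superstr_cons_cons, lsS_cons_cons]
      exact ih.trans (List.suffix_append _ _)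

lemma superstr_append (z₁ : List Str) (b : Str) (l₂ : List Str) (h : z₁ ≠ []) :
    superstr (z₁ ++ b :: l₂) =
      (superstr z₁).take ((superstr z₁).length - ov (lsS z₁) b) ++ superstr (b :: l₂) := by
  induction z₁ with
  | nil => exact absurd rfl h
  | cons a l ih =>
    cases l with
    | nil =>
      simp only [List.cons_append, List.nil_append, superstr_cons_cons, superstr_singleton,
        lsS_singleton]
      rfl
    | cons c m =>
      have ih' := ih (by simp)
      have e1 : (a :: c :: m) ++ b :: l₂ = a :: c :: (m ++ b :: l₂) := rfl
      have e2 : (c :: m) ++ b :: l₂ = c :: (m ++ b :: l₂) := rfl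
      rw [e2] at ih'
      rw [e1, superstr_cons_cons, ih', superstr_cons_cons a c m, lsS_cons_cons]
      have hle : ov (lsS (c :: m)) b ≤ (superstr (c :: m)).length :=
        le_trans (ov_le_left _ _) (lsS_suffix (c :: m)).length_le
      rw [← List.append_assoc]
      congr 1
      have hlen : (prefStr a c ++ superstr (c :: m)).length -
          ov (lsS (c :: m)) b = (prefStr a c).length +
            ((superstr (c :: m)).length - ov (lsS (c :: m)) b) := by
        simp only [List.length_append]; omega
      rw [hlen, List.take_length_add_append]

lemma length_superstr_append {z₁ z₂ : List Str} (h₁ : z₁ ≠ []) (h₂ : z₂ ≠ []) :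
    (superstr (z₁ ++ z₂)).length + ov (lsS z₁) (hdS z₂) =
      (superstr z₁).length + (superstr z₂).length := by
  cases z₂ with
  | nil => exact absurd rfl h₂
  | cons b l₂ =>
    rw [superstr_append z₁ b l₂ h₁]
    have hle : ov (lsS z₁) b ≤ (superstr z₁).length :=
      le_trans (ov_le_left _ _) (lsS_suffix z₁).length_le
    simp only [List.length_append, List.length_take, hdS_cons]
    omega

-- ### rcPath lemmas

@[simp] lemma rcPath_nil : rcPath [] = [] := rfl
@[simp] lemma rcPath_singleton (x : Str) : rcPath [x] = [rc x] := rfl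

lemma rcPath_append (a b : List Str) : rcPath (a ++ b) = rcPath b ++ rcPath a := by
  simp [rcPath]

@[simp] lemma rcPath_rcPath (z : List Str) : rcPath (rcPath z) = z := by
  simp [rcPath, List.map_reverse, List.map_map]
  have : rc ∘ rc = id := by funext a; simp [rc_rc]
  simp [this]

lemma rcPath_eq_nil_iff {z : List Str} : rcPath z = [] ↔ z = [] := by
  constructor
  · intro h
    have := congrArg List.length h
    simpa [rcPath] using this
  · rintro rfl; rfl

lemma mem_rcPath {a : Str} {z : List Str} : a ∈ rcPath z ↔ rc a ∈ z := by
  simp only [rcPath, List.mem_reverse, List.mem_map]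
  constructor
  · rintro ⟨b, hb, rfl⟩; rwa [rc_rc]
  · intro h; exact ⟨rc a, h, rc_rc a⟩

lemma rcPath_inj {a b : List Str} (h : rcPath a = rcPath b) : a = b := by
  have := congrArg rcPath h; simpa using this

lemma hdS_rcPath (z : List Str) : hdS (rcPath z) = rc (lsS z) := by
  induction z with
  | nil => simp
  | cons a l ih =>
    cases l with
    | nil => simp
    | cons b m =>
      have : rcPath (a :: b :: m) = rcPath (b :: m) ++ [rc a] := by
        rw [show a :: b :: m = [a] ++ (b :: m) from rfl, rcPath_append, rcPath_singleton]
      rw [this, hdS_append, ih, lsS_cons_cons]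
      simp [rcPath_eq_nil_iff]

lemma lsS_rcPath (z : List Str) : lsS (rcPath z) = rc (hdS z) := by
  have := hdS_rcPath (rcPath z)
  rw [rcPath_rcPath] at this
  have h2 := congrArg rc this
  rw [rc_rc] at h2
  exact h2.symm

-- rc_take helper
lemma rc_take (u : Str) (k : ℕ) (hk : k ≤ u.length) :
    (rc u).take (u.length - k) = rc (u.drop k) := by
  have h1 : rc u = rc (u.drop k) ++ rc (u.take k) := by
    conv_lhs => rw [← List.take_append_drop k u]
    rw [rc_append]
  rw [h1]
  have h2 : (rc (u.drop k)).length = u.length - k := by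
    simp [rc]
  rw [← h2, List.take_left]

lemma rc_superstr (z : List Str) : superstr (rcPath z) = rc (superstr z) := by
  induction z with
  | nil => simp
  | cons a l ih =>
    cases l with
    | nil => simp
    | cons c r =>
      have hrc : rcPath (a :: c :: r) = rcPath (c :: r) ++ [rc a] := by
        rw [show a :: c :: r = [a] ++ (c :: r) from rfl, rcPath_append, rcPath_singleton]
      rw [hrc, superstr_append _ _ _ (by simp [rcPath_eq_nil_iff]), ih]
      rw [lsS_rcPath, hdS_cons]
      set S' := superstr (c :: r)
      set k := ov a c with hk
      have hov : ov (rc c) (rc a) = ov a c := ov_rc a c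
      have hlen : (rc S').length = S'.length := by simp [rc]
      rw [hov]
      have hkc : k ≤ c.length := ov_le_right a c
      have hkS : k ≤ S'.length :=
        le_trans hkc (by simpa using (hdS_prefix (c :: r)).length_le)
      rw [superstr_singleton, hlen, rc_take S' k hkS]
      rw [superstr_cons_cons, rc_append]
      have key : a ++ S'.drop k = prefStr a c ++ S' := by
        have h1 : a = prefStr a c ++ a.drop (a.length - k) := (prefStr_append_drop a c).symm
        have h2 : a.drop (a.length - k) = S'.take k := by
          have hpre : a.drop (a.length - k) <+: S' :=
            (drop_ov_prefix a c).trans (by simpa using hdS_prefix (c :: r))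
          have hlen2 : (a.drop (a.length - k)).length = k := by
            have : k ≤ a.length := ov_le_left a c
            simp; omega
          rw [List.prefix_iff_eq_take] at hpre
          rw [hpre, hlen2]
        conv_lhs => rw [h1, h2]
        rw [List.append_assoc, List.take_append_drop]
      calc rc (S'.drop k) ++ rc a = rc (a ++ S'.drop k) := (rc_append _ _).symm
        _ = rc (prefStr a c ++ S') := by rw [key]
        _ = rc S' ++ rc (prefStr a c) := rc_append _ _


-- ### Edges

def EdgeOf (z : List Str) (a b : Str) : Prop := ∃ l r, z = l ++ a :: b :: r

lemma EdgeOf.mem_left {z : List Str} {a b : Str} (h : EdgeOf z a b) : a ∈ z := by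
  obtain ⟨l, r, rfl⟩ := h; simp

lemma EdgeOf.mem_right {z : List Str} {a b : Str} (h : EdgeOf z a b) : b ∈ z := by
  obtain ⟨l, r, rfl⟩ := h; simp

lemma EdgeOf.cons {z : List Str} {a b : Str} (x : Str) (h : EdgeOf z a b) :
    EdgeOf (x :: z) a b := by
  obtain ⟨l, r, rfl⟩ := h; exact ⟨x :: l, r, rfl⟩

lemma edgeOf_append_left {p : List Str} (q : List Str) {a b : Str} (h : EdgeOf p a b) :
    EdgeOf (p ++ q) a b := by
  obtain ⟨l, r, rfl⟩ := h; exact ⟨l, r ++ q, by simp⟩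

lemma edgeOf_append_right (p : List Str) {q : List Str} {a b : Str} (h : EdgeOf q a b) :
    EdgeOf (p ++ q) a b := by
  obtain ⟨l, r, rfl⟩ := h; exact ⟨p ++ l, r, by simp⟩

lemma edgeOf_append {p q : List Str} {a b : Str} : EdgeOf (p ++ q) a b →
    EdgeOf p a b ∨ EdgeOf q a b ∨ (p ≠ [] ∧ q ≠ [] ∧ a = lsS p ∧ b = hdS q) := by
  induction p with
  | nil => exact fun h => Or.inr (Or.inl (by simpa using h))
  | cons x p' ih =>
    rintro ⟨l, r, heq⟩
    cases l with
    | nil =>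
      simp only [List.nil_append, List.cons_append, List.cons.injEq] at heq
      obtain ⟨rfl, heq2⟩ := heq
      cases p' with
      | nil =>
        simp only [List.nil_append] at heq2
        refine Or.inr (Or.inr ⟨by simp, ?_, rfl, ?_⟩)
        · rw [heq2]; simp
        · rw [heq2]; rfl
      | cons c p'' =>
        simp only [List.cons_append, List.cons.injEq] at heq2
        obtain ⟨rfl, -⟩ := heq2
        exact Or.inl ⟨[], p'', rfl⟩
    | cons y l' =>
      simp only [List.cons_append, List.cons.injEq] at heq
      obtain ⟨rfl, heq2⟩ := heq
      rcases ih ⟨l', r, heq2⟩ with h1 | h1 | ⟨hp', hq, ha, hb⟩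
      · exact Or.inl (h1.cons x)
      · exact Or.inr (Or.inl h1)
      · exact Or.inr (Or.inr ⟨by simp, hq, by rw [ha, lsS_cons_ne x hp'], hb⟩)

lemma edgeOf_rcPath {z : List Str} {a b : Str} (h : EdgeOf z a b) :
    EdgeOf (rcPath z) (rc b) (rc a) := by
  obtain ⟨l, r, rfl⟩ := h
  refine ⟨rcPath r, rcPath l, ?_⟩
  have : l ++ a :: b :: r = (l ++ [a, b]) ++ r := by simp
  rw [this, rcPath_append, rcPath_append]
  have : rcPath [a, b] = [rc b, rc a] := rfl
  rw [this]
  simp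

lemma eq_dropLast_append_lsS {z : List Str} (h : z ≠ []) : z = z.dropLast ++ [lsS z] := by
  induction z with
  | nil => exact absurd rfl h
  | cons a l ih =>
    cases l with
    | nil => rfl
    | cons b m =>
      have := ih (by simp)
      rw [lsS_cons_cons]
      conv_lhs => rw [show a :: b :: m = a :: (b :: m) from rfl, this]
      rfl

lemma edgeOf_take_drop {z : List Str} {j : ℕ} (h1 : 1 ≤ j) (h2 : j < z.length) :
    EdgeOf z (lsS (z.take j)) (hdS (z.drop j)) := by
  have ht : (z.take j) ≠ [] := by
    have : (z.take j).length = j := by simp; omega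
    intro hh; rw [hh] at this; simp at this; omega
  have hd : (z.drop j) ≠ [] := by
    have : (z.drop j).length = z.length - j := by simp
    intro hh; rw [hh] at this; simp at this; omega
  have e3 : z.drop j = hdS (z.drop j) :: (z.drop j).tail := by
    cases hzd : z.drop j with
    | nil => exact absurd hzd hd
    | cons u t => rfl
  refine ⟨(z.take j).dropLast, (z.drop j).tail, ?_⟩
  conv_lhs => rw [← List.take_append_drop j z]
  conv_lhs => rw [eq_dropLast_append_lsS ht, e3]
  simp

-- ### Collection membership and invariant

def memP (P : Finset (List Str)) (z : List Str) : Prop := z ∈ P ∨ rcPath z ∈ P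

lemma memP_rcPath {P : Finset (List Str)} {z : List Str} (h : memP P z) : memP P (rcPath z) := by
  rcases h with h | h
  · exact Or.inr (by rwa [rcPath_rcPath])
  · exact Or.inl h

structure GInv (S : Finset Str) (P : Finset (List Str)) : Prop where
  i1 : ∀ z, memP P z → z ≠ [] ∧ ∀ a ∈ z, (a ∈ S ∨ rc a ∈ S) ∧ a ≠ []
  i2 : ∀ z₁ z₂, memP P z₁ → memP P z₂ → ∀ a ∈ z₁, ∀ b ∈ z₂, (a = b ∨ a = rc b) →
        z₁ = z₂ ∨ z₁ = rcPath z₂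
  i3 : ∀ z₁ z₂, memP P z₁ → memP P z₂ → rc (superstr z₁) ≠ superstr z₂ →
        ov (superstr z₁) (superstr z₂) ≤ ov (lsS z₁) (hdS z₂)
  i4 : ∀ z₁ z₂, memP P z₁ → memP P z₂ → z₁ ≠ z₂ → z₁ ≠ rcPath z₂ →
        ¬ superstr z₁ <:+: superstr z₂
  i6 : ∀ z, memP P z → ∀ a b, EdgeOf z a b → ∀ q₁ q₂, ValidPairP P q₁ q₂ →
        ov (superstr q₁) (superstr q₂) ≤ ov a b

lemma superstr_ne_nil {z : List Str} (hz : z ≠ []) (hh : hdS z ≠ []) : superstr z ≠ [] := by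
  intro h
  have := hdS_prefix z
  rw [h] at this
  exact hh (List.prefix_nil.mp this)

lemma GInv.hd_ne_nil {S P} (H : GInv S P) {z : List Str} (h : memP P z) : hdS z ≠ [] :=
  ((H.i1 z h).2 (hdS z) (hdS_mem (H.i1 z h).1)).2

lemma GInv.ls_ne_nil {S P} (H : GInv S P) {z : List Str} (h : memP P z) : lsS z ≠ [] :=
  ((H.i1 z h).2 (lsS z) (lsS_mem (H.i1 z h).1)).2

lemma GInv.s_ne_nil {S P} (H : GInv S P) {z : List Str} (h : memP P z) : superstr z ≠ [] :=
  superstr_ne_nil (H.i1 z h).1 (H.hd_ne_nil h)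

lemma GInv.dup {S P} (hS : SubstrFree S) (H : GInv S P) {z₁ z₂ : List Str}
    (h₁ : memP P z₁) (h₂ : memP P z₂) (he : superstr z₁ = superstr z₂) :
    z₁ = z₂ ∨ z₁ = rcPath z₂ := by
  have hne₁ := (H.i1 z₁ h₁).1
  have hne₂ := (H.i1 z₂ h₂).1
  have hp₁ : hdS z₁ <+: superstr z₂ := he ▸ hdS_prefix z₁
  have hp₂ : hdS z₂ <+: superstr z₂ := hdS_prefix z₂
  have hm₁ := (H.i1 z₁ h₁).2 (hdS z₁) (hdS_mem hne₁)
  have hm₂ := (H.i1 z₂ h₂).2 (hdS z₂) (hdS_mem hne₂)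
  have heq : hdS z₁ = hdS z₂ := by
    rcases le_total (hdS z₁).length (hdS z₂).length with hl | hl
    · have hpp := List.prefix_of_prefix_length_le hp₁ hp₂ hl
      by_contra hcon
      exact hS (hdS z₁) hm₁.1 (hdS z₂) hm₂.1 hcon hpp.isInfix
    · have hpp := List.prefix_of_prefix_length_le hp₂ hp₁ hl
      by_contra hcon
      exact hS (hdS z₂) hm₂.1 (hdS z₁) hm₁.1 (Ne.symm hcon) hpp.isInfix
  exact H.i2 z₁ z₂ h₁ h₂ (hdS z₁) (hdS_mem hne₁) (hdS z₂) (hdS_mem hne₂) (Or.inl heq)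


-- ### Merge step analysis

/-- `z` is an untouched old collection member. -/
def OldZ (P : Finset (List Str)) (p q z : List Str) : Prop :=
  memP P z ∧ z ≠ p ∧ z ≠ rcPath p ∧ z ≠ q ∧ z ≠ rcPath q

section MergeStep

variable {S : Finset Str} {P : Finset (List Str)} {p q : List Str}

/-- Bundle of facts available at a merge step. -/
structure MergeCtx (S : Finset Str) (P : Finset (List Str)) (p q : List Str) : Prop where
  hS : SubstrFree S
  H : GInv S P
  hp : memP P p
  hq : memP P q
  hne : superstr p ≠ superstr q
  hrc : rc (superstr p) ≠ superstr q
  hmax : ∀ q₁ q₂, ValidPairP P q₁ q₂ →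
    ov (superstr q₁) (superstr q₂) ≤ ov (superstr p) (superstr q)

namespace MergeCtx

variable (M : MergeCtx S P p q)
include M

lemma p_ne_nil : p ≠ [] := (M.H.i1 p M.hp).1
lemma q_ne_nil : q ≠ [] := (M.H.i1 q M.hq).1
lemma sp_ne_nil : superstr p ≠ [] := M.H.s_ne_nil M.hp
lemma sq_ne_nil : superstr q ≠ [] := M.H.s_ne_nil M.hq

/-- localization of the merged overlap -/
lemma loc : ov (superstr p) (superstr q) = ov (lsS p) (hdS q) := by
  refine le_antisymm (M.H.i3 p q M.hp M.hq M.hrc) ?_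
  exact ov_mono (lsS_suffix p) (hdS_prefix q) (M.H.ls_ne_nil M.hp) (M.H.hd_ne_nil M.hq)

lemma t_lt_sp : ov (superstr p) (superstr q) < (superstr p).length := by
  obtain ⟨v, hv, -, -, h, -⟩ := ov_spec M.sp_ne_nil M.sq_ne_nil
  omega

lemma t_lt_sq : ov (superstr p) (superstr q) < (superstr q).length := by
  obtain ⟨v, hv, -, -, -, h⟩ := ov_spec M.sp_ne_nil M.sq_ne_nil
  omega

lemma viewB : superstr (p ++ q) =
    (superstr p).take ((superstr p).length - ov (superstr p) (superstr q)) ++ superstr q := by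
  have hq' : q = hdS q :: q.tail := by
    cases hqq : q with
    | nil => exact absurd hqq M.q_ne_nil
    | cons u l => rfl
  conv_lhs => rw [hq']
  rw [superstr_append p (hdS q) q.tail M.p_ne_nil, ← hq', M.loc]

lemma viewA : superstr (p ++ q) = superstr p ++ (superstr q).drop (ov (superstr p) (superstr q)) := by
  have h1 : superstr p = (superstr p).take ((superstr p).length - ov (superstr p) (superstr q))
      ++ (superstr q).take (ov (superstr p) (superstr q)) := by
    conv_lhs => rw [← List.take_append_drop ((superstr p).length -
      ov (superstr p) (superstr q)) (superstr p)]
    rw [drop_ov_eq_take M.sp_ne_nil M.sq_ne_nil]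
  rw [M.viewB]
  have h2 : superstr p ++ (superstr q).drop (ov (superstr p) (superstr q)) =
      ((superstr p).take ((superstr p).length - ov (superstr p) (superstr q)) ++
        (superstr q).take (ov (superstr p) (superstr q))) ++
        (superstr q).drop (ov (superstr p) (superstr q)) := by
    rw [← h1]
  rw [h2, List.append_assoc, List.take_append_drop]

lemma sp_prefix : superstr p <+: superstr (p ++ q) := by
  rw [M.viewA]; exact List.prefix_append _ _

lemma sq_suffix : superstr q <:+ superstr (p ++ q) := by
  rw [M.viewB]; exact List.suffix_append _ _

lemma len_m : (superstr (p ++ q)).length + ov (superstr p) (superstr q) =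
    (superstr p).length + (superstr q).length := by
  rw [M.loc]
  exact length_superstr_append M.p_ne_nil M.q_ne_nil

lemma sp_lt_sm : (superstr p).length < (superstr (p ++ q)).length := by
  have := M.len_m; have := M.t_lt_sq; omega

lemma sq_lt_sm : (superstr q).length < (superstr (p ++ q)).length := by
  have := M.len_m; have := M.t_lt_sp; omega

lemma sm_ne_nil : superstr (p ++ q) ≠ [] := by
  have := M.sp_lt_sm
  intro h; rw [h] at this; simp at this

lemma hdS_m : hdS (p ++ q) = hdS p := hdS_append M.p_ne_nil
lemma lsS_m : lsS (p ++ q) = lsS q := lsS_append M.q_ne_nil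

lemma p_ne_q : p ≠ q := fun h => M.hne (by rw [h])
lemma p_ne_rcq : p ≠ rcPath q := by
  intro h
  exact M.hrc (by rw [h, rc_superstr, rc_rc])

/-- facts about untouched old members -/
lemma old_vals {z : List Str} (hz : OldZ P p q z) :
    superstr z ≠ superstr p ∧ superstr z ≠ rc (superstr p) ∧
    superstr z ≠ superstr q ∧ superstr z ≠ rc (superstr q) := by
  obtain ⟨hzm, h1, h2, h3, h4⟩ := hz
  refine ⟨?_, ?_, ?_, ?_⟩
  · intro he
    rcases M.H.dup M.hS hzm M.hp he with h | h
    · exact h1 h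
    · exact h2 h
  · intro he
    have he' : superstr z = superstr (rcPath p) := by rw [rc_superstr]; exact he
    rcases M.H.dup M.hS hzm (memP_rcPath M.hp) he' with h | h
    · exact h2 h
    · rw [rcPath_rcPath] at h; exact h1 h
  · intro he
    rcases M.H.dup M.hS hzm M.hq he with h | h
    · exact h3 h
    · exact h4 h
  · intro he
    have he' : superstr z = superstr (rcPath q) := by rw [rc_superstr]; exact he
    rcases M.H.dup M.hS hzm (memP_rcPath M.hq) he' with h | h
    · exact h4 h
    · rw [rcPath_rcPath] at h; exact h3 h

lemma old_rcPath {z : List Str} (hz : OldZ P p q z) : OldZ P p q (rcPath z) := by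
  obtain ⟨hzm, h1, h2, h3, h4⟩ := hz
  refine ⟨memP_rcPath hzm, ?_, ?_, ?_, ?_⟩
  · intro h
    have := congrArg rcPath h
    rw [rcPath_rcPath] at this
    exact h2 this
  · intro h; exact h1 (rcPath_inj h)
  · intro h
    have := congrArg rcPath h
    rw [rcPath_rcPath] at this
    exact h4 this
  · intro h; exact h3 (rcPath_inj h)

end MergeCtx
end MergeStep


namespace MergeCtx

variable {S : Finset Str} {P : Finset (List Str)} {p q : List Str}
variable (M : MergeCtx S P p q)
include M

lemma q_ne_rcp : q ≠ rcPath p := by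
  intro h
  apply M.p_ne_rcq
  have := congrArg rcPath h
  rw [rcPath_rcPath] at this
  exact this.symm

lemma rc_sq_ne_sp : rc (superstr q) ≠ superstr p := by
  intro hcon
  exact M.hrc (by rw [← hcon, rc_rc])

lemma B1 {z : List Str} (hz : OldZ P p q z) :
    ov (superstr (p ++ q)) (superstr z) ≤ ov (superstr p) (superstr q) ∧
    ov (superstr (p ++ q)) (superstr z) ≤ ov (lsS q) (hdS z) := by
  have hszne : superstr z ≠ [] := M.H.s_ne_nil hz.1
  obtain ⟨v, hv, hvsuf, hvpre, hvlt1, hvlt2⟩ := ov_spec M.sm_ne_nil hszne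
  rcases lt_or_ge v.length (superstr q).length with hlt | hge
  · have hvq : v <:+ superstr q := List.suffix_of_suffix_length_le hvsuf M.sq_suffix hlt.le
    have hle : v.length ≤ ov (superstr q) (superstr z) := le_ov hvq hvpre hlt hvlt2
    have hrcne : rc (superstr q) ≠ superstr z := fun hcon => (M.old_vals hz).2.2.2 hcon.symm
    have hvalid : ValidPairP P q z := by
      refine ⟨M.hq, hz.1, ?_⟩
      rcases eq_or_ne (superstr q) (superstr z) with he | hne2
      · exact Or.inl he
      · exact Or.inr ⟨hne2, hrcne⟩
    constructor
    · rw [← hv]; exact le_trans hle (M.hmax q z hvalid)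
    · rw [← hv]; exact le_trans hle (M.H.i3 q z M.hq hz.1 hrcne)
  · exfalso
    have hqv : superstr q <:+ v := List.suffix_of_suffix_length_le M.sq_suffix hvsuf hge
    have hinf : superstr q <:+: superstr z := hqv.isInfix.trans hvpre.isInfix
    refine M.H.i4 q z M.hq hz.1 (fun h => hz.2.2.2.1 h.symm) ?_ hinf
    intro h
    apply hz.2.2.2.2
    have := congrArg rcPath h
    rw [rcPath_rcPath] at this
    exact this.symm

lemma B2 {z : List Str} (hz : OldZ P p q z) :
    ov (superstr z) (superstr (p ++ q)) ≤ ov (superstr p) (superstr q) ∧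
    ov (superstr z) (superstr (p ++ q)) ≤ ov (lsS z) (hdS p) := by
  have hszne : superstr z ≠ [] := M.H.s_ne_nil hz.1
  have hpnez : p ≠ z := fun h => hz.2.1 h.symm
  have hpnercz : p ≠ rcPath z := by
    intro h
    apply hz.2.2.1
    have := congrArg rcPath h
    rw [rcPath_rcPath] at this
    exact this.symm
  obtain ⟨v, hv, hvsuf, hvpre, hvlt1, hvlt2⟩ := ov_spec hszne M.sm_ne_nil
  rcases lt_trichotomy v.length (superstr p).length with hlt | heq | hgt
  · have hvp : v <+: superstr p := List.prefix_of_prefix_length_le hvpre M.sp_prefix hlt.le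
    have hle : v.length ≤ ov (superstr z) (superstr p) := le_ov hvsuf hvp hvlt1 hlt
    have hrcne : rc (superstr z) ≠ superstr p := by
      intro hcon
      exact (M.old_vals hz).2.1 (by rw [← hcon, rc_rc])
    have hvalid : ValidPairP P z p := by
      refine ⟨hz.1, M.hp, ?_⟩
      exact Or.inr ⟨(M.old_vals hz).1, hrcne⟩
    constructor
    · rw [← hv]; exact le_trans hle (M.hmax z p hvalid)
    · rw [← hv]; exact le_trans hle (M.H.i3 z p hz.1 M.hp hrcne)
  · exfalso
    have hvp : v <+: superstr p := List.prefix_of_prefix_length_le hvpre M.sp_prefix heq.le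
    have hveq : v = superstr p := hvp.eq_of_length heq
    rw [hveq] at hvsuf
    exact M.H.i4 p z M.hp hz.1 hpnez hpnercz hvsuf.isInfix
  · exfalso
    have hpv : superstr p <+: v := List.prefix_of_prefix_length_le M.sp_prefix hvpre hgt.le
    exact M.H.i4 p z M.hp hz.1 hpnez hpnercz (hpv.isInfix.trans hvsuf.isInfix)

lemma B3 : ov (superstr (p ++ q)) (superstr (p ++ q)) ≤ ov (superstr p) (superstr q) ∧
    ov (superstr (p ++ q)) (superstr (p ++ q)) ≤ ov (lsS q) (hdS p) := by
  obtain ⟨v, hv, hvsuf, hvpre, hvlt, -⟩ := ov_spec M.sm_ne_nil M.sm_ne_nil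
  rcases lt_or_ge v.length (superstr q).length with hltq | hgeq
  · rcases lt_or_ge v.length (superstr p).length with hltp | hgep
    · have hvq : v <:+ superstr q := List.suffix_of_suffix_length_le hvsuf M.sq_suffix hltq.le
      have hvp : v <+: superstr p := List.prefix_of_prefix_length_le hvpre M.sp_prefix hltp.le
      have hle : v.length ≤ ov (superstr q) (superstr p) := le_ov hvq hvp hltq hltp
      have hvalid : ValidPairP P q p :=
        ⟨M.hq, M.hp, Or.inr ⟨fun h => M.hne h.symm, M.rc_sq_ne_sp⟩⟩
      constructor
      · rw [← hv]; exact le_trans hle (M.hmax q p hvalid)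
      · rw [← hv]; exact le_trans hle (M.H.i3 q p M.hq M.hp M.rc_sq_ne_sp)
    · exfalso
      have h1 : superstr p <+: v := List.prefix_of_prefix_length_le M.sp_prefix hvpre hgep
      have h2 : v <:+ superstr q := List.suffix_of_suffix_length_le hvsuf M.sq_suffix hltq.le
      exact M.H.i4 p q M.hp M.hq M.p_ne_q M.p_ne_rcq (h1.isInfix.trans h2.isInfix)
  · rcases le_or_gt v.length (superstr p).length with hlep | hgtp
    · exfalso
      have h1 : superstr q <:+ v := List.suffix_of_suffix_length_le M.sq_suffix hvsuf hgeq
      have h2 : v <+: superstr p := List.prefix_of_prefix_length_le hvpre M.sp_prefix hlep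
      exact M.H.i4 q p M.hq M.hp (fun h => M.p_ne_q h.symm) M.q_ne_rcp
        (h1.isInfix.trans h2.isInfix)
    · -- the shifted-self-occurrence argument
      exfalso
      obtain ⟨γ, hγ⟩ : superstr q <:+ v :=
        List.suffix_of_suffix_length_le M.sq_suffix hvsuf hgeq
      obtain ⟨β, hβ⟩ := hvpre
      have hlenm := M.len_m
      have htlt_sq := M.t_lt_sq
      have htlt_sp := M.t_lt_sp
      have hγlen : γ.length + (superstr q).length = v.length := by
        have := congrArg List.length hγ; simpa using this
      have hβlen : v.length + β.length = (superstr (p ++ q)).length := by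
        have := congrArg List.length hβ; simpa using this
      have e1 : (γ ++ superstr q) ++ β = superstr (p ++ q) := by rw [hγ, hβ]
      have htake_len : ((superstr p).take ((superstr p).length -
          ov (superstr p) (superstr q))).length =
          (superstr (p ++ q)).length - (superstr q).length := by
        simp only [List.length_take]
        omega
      have d1 : (superstr (p ++ q)).drop
          ((superstr (p ++ q)).length - (superstr q).length) = superstr q := by
        rw [← htake_len]
        conv_lhs => rw [M.viewB]
        rw [List.drop_left]
      set δ := (superstr (p ++ q)).length - v.length with hδdef
      have hidx : (superstr (p ++ q)).length - (superstr q).length = γ.length + δ := by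
        omega
      have d2 : (superstr (p ++ q)).drop
          ((superstr (p ++ q)).length - (superstr q).length) =
          (superstr q).drop δ ++ β := by
        have h := congrArg (List.drop (γ.length + δ)) e1
        rw [List.append_assoc, List.drop_length_add_append] at h
        rw [List.drop_append] at h
        have hz0 : δ - (superstr q).length = 0 := by omega
        rw [hz0, List.drop_zero] at h
        rw [hidx]
        exact h.symm
      have key : superstr q = (superstr q).drop δ ++ β := d1.symm.trans d2
      have hwpre : (superstr q).drop δ <+: superstr q := ⟨β, key.symm⟩
      have hwsuf : (superstr q).drop δ <:+ superstr q := List.drop_suffix _ _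
      have hwlen : ((superstr q).drop δ).length = (superstr q).length - δ := by simp
      have hδpos : 1 ≤ δ := by omega
      have hwlt : ((superstr q).drop δ).length < (superstr q).length := by
        rw [hwlen]
        have hsqpos : 0 < (superstr q).length := List.length_pos_iff.2 M.sq_ne_nil
        omega
      have hle2 : ((superstr q).drop δ).length ≤ ov (superstr q) (superstr q) :=
        le_ov hwsuf hwpre hwlt hwlt
      have hbound : ov (superstr q) (superstr q) ≤ ov (superstr p) (superstr q) :=
        M.hmax q q ⟨M.hq, M.hq, Or.inl rfl⟩
      rw [hwlen] at hle2
      omega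

end MergeCtx


-- prefix-comparison helper
lemma prefix_eq_of_substrFree {S : Finset Str} (hS : SubstrFree S) {a b w : Str}
    (ha : a ∈ S ∨ rc a ∈ S) (hb : b ∈ S ∨ rc b ∈ S)
    (hpa : a <+: w) (hpb : b <+: w) : a = b := by
  rcases le_total a.length b.length with hl | hl
  · have hpp := List.prefix_of_prefix_length_le hpa hpb hl
    by_contra hcon
    exact hS a ha b hb hcon hpp.isInfix
  · have hpp := List.prefix_of_prefix_length_le hpb hpa hl
    by_contra hcon
    exact hS b hb a ha (Ne.symm hcon) hpp.isInfix

namespace MergeCtx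

variable {S : Finset Str} {P : Finset (List Str)} {p q : List Str}
variable (M : MergeCtx S P p q)
include M

lemma old_p_facts {z : List Str} (hz : OldZ P p q z) : p ≠ z ∧ p ≠ rcPath z := by
  refine ⟨fun h => hz.2.1 h.symm, fun h => ?_⟩
  apply hz.2.2.1
  have := congrArg rcPath h
  rw [rcPath_rcPath] at this
  exact this.symm

lemma memP'_elim {z : List Str}
    (hz : memP (insert (p ++ q) (P \ {p, rcPath p, q, rcPath q})) z) :
    z = p ++ q ∨ z = rcPath (p ++ q) ∨ OldZ P p q z := by
  have hrem : ∀ w : List Str, w ∈ ({p, rcPath p, q, rcPath q} : Finset (List Str)) ↔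
      (w = p ∨ w = rcPath p ∨ w = q ∨ w = rcPath q) := by
    intro w; simp
  rcases hz with hz | hz
  · rcases Finset.mem_insert.mp hz with h | h
    · exact Or.inl h
    · obtain ⟨hmem, hnot⟩ := Finset.mem_sdiff.mp h
      rw [hrem] at hnot
      push_neg at hnot
      exact Or.inr (Or.inr ⟨Or.inl hmem, hnot.1, hnot.2.1, hnot.2.2.1, hnot.2.2.2⟩)
  · rcases Finset.mem_insert.mp hz with h | h
    · right; left
      have := congrArg rcPath h
      rw [rcPath_rcPath] at this
      exact this
    · obtain ⟨hmem, hnot⟩ := Finset.mem_sdiff.mp h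
      rw [hrem] at hnot
      push_neg at hnot
      refine Or.inr (Or.inr ⟨Or.inr hmem, ?_, ?_, ?_, ?_⟩)
      · intro he; exact hnot.2.1 (by rw [he])
      · intro he; exact hnot.1 (by rw [he, rcPath_rcPath])
      · intro he; exact hnot.2.2.2 (by rw [he])
      · intro he; exact hnot.2.2.1 (by rw [he, rcPath_rcPath])

lemma mem_m_orig {a : Str} (ha : a ∈ p ++ q) : (a ∈ S ∨ rc a ∈ S) ∧ a ≠ [] := by
  rcases List.mem_append.mp ha with h | h
  · exact (M.H.i1 p M.hp).2 a h
  · exact (M.H.i1 q M.hq).2 a h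

lemma sm_ne_rc : superstr (p ++ q) ≠ rc (superstr (p ++ q)) := by
  intro he
  have h1 : hdS (p ++ q) <+: superstr (p ++ q) := hdS_prefix _
  have h2 : hdS (rcPath (p ++ q)) <+: superstr (rcPath (p ++ q)) := hdS_prefix _
  rw [rc_superstr, ← he] at h2
  rw [hdS_rcPath, M.lsS_m] at h2
  rw [M.hdS_m] at h1
  have hma : hdS p ∈ S ∨ rc (hdS p) ∈ S :=
    ((M.H.i1 p M.hp).2 (hdS p) (hdS_mem M.p_ne_nil)).1
  have hmb : lsS q ∈ S ∨ rc (lsS q) ∈ S :=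
    ((M.H.i1 q M.hq).2 (lsS q) (lsS_mem M.q_ne_nil)).1
  have hmb' : rc (lsS q) ∈ S ∨ rc (rc (lsS q)) ∈ S := by
    rw [rc_rc]; exact hmb.symm
  have heq : hdS p = rc (lsS q) := prefix_eq_of_substrFree M.hS hma hmb' h1 h2
  have := M.H.i2 p q M.hp M.hq (hdS p) (hdS_mem M.p_ne_nil) (lsS q) (lsS_mem M.q_ne_nil)
    (Or.inr heq)
  rcases this with h | h
  · exact M.p_ne_q h
  · exact M.p_ne_rcq h

lemma notinf_m_old {z : List Str} (hz : OldZ P p q z) :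
    ¬ superstr (p ++ q) <:+: superstr z := by
  intro hinf
  exact M.H.i4 p z M.hp hz.1 (M.old_p_facts hz).1 (M.old_p_facts hz).2
    (M.sp_prefix.isInfix.trans hinf)

lemma notinf_old_m {z : List Str} (hz : OldZ P p q z) :
    ¬ superstr z <:+: superstr (p ++ q) := by
  intro hinf
  have hszne : superstr z ≠ [] := M.H.s_ne_nil hz.1
  obtain ⟨α, β, hαβ⟩ := hinf
  have hlenm := M.len_m
  have htlt_sp := M.t_lt_sp
  have htlt_sq := M.t_lt_sq
  have hlen_eq : α.length + ((superstr z).length + β.length) =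
      (superstr (p ++ q)).length := by
    have := congrArg List.length hαβ; simpa using this
  rcases le_or_gt (α.length + (superstr z).length) (superstr p).length with hA | hA
  · -- occurrence inside the `superstr p` part
    have hpref : α ++ superstr z <+: superstr (p ++ q) := ⟨β, hαβ⟩
    have hpref2 : α ++ superstr z <+: superstr p :=
      List.prefix_of_prefix_length_le hpref M.sp_prefix (by simpa using hA)
    obtain ⟨γ, hγ⟩ := hpref2
    have hinf2 : superstr z <:+: superstr p := ⟨α, γ, hγ⟩
    exact M.H.i4 z p hz.1 M.hp hz.2.1 hz.2.2.1 hinf2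
  rcases le_or_gt ((superstr (p ++ q)).length - (superstr q).length) α.length with hB | hB
  · -- occurrence inside the `superstr q` part
    have hsufz : superstr z ++ β <:+ superstr (p ++ q) :=
      ⟨α, by rw [← List.append_assoc]; exact hαβ⟩
    have hsufz2 : superstr z ++ β <:+ superstr q :=
      List.suffix_of_suffix_length_le hsufz M.sq_suffix (by simp; omega)
    obtain ⟨γ, hγ⟩ := hsufz2
    have hinf2 : superstr z <:+: superstr q := ⟨γ, β, by rw [List.append_assoc]; exact hγ⟩
    exact M.H.i4 z q hz.1 M.hq hz.2.2.2.1 hz.2.2.2.2 hinf2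
  · -- crossing occurrence
    rcases eq_or_ne α [] with rfl | hαne
    · have hzpre : superstr z <+: superstr (p ++ q) := ⟨β, by simpa using hαβ⟩
      have hsp_z : superstr p <+: superstr z :=
        List.prefix_of_prefix_length_le M.sp_prefix hzpre (by simp at hA; omega)
      exact M.H.i4 p z M.hp hz.1 (M.old_p_facts hz).1 (M.old_p_facts hz).2 hsp_z.isInfix
    · have hαpos : 0 < α.length := List.length_pos_iff.2 hαne
      have hαlt : α.length < (superstr p).length := by omega
      have h1 : (superstr (p ++ q)).take (superstr p).length = superstr p := by
        conv_lhs => rw [M.viewA]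
        rw [List.take_left]
      have h2 : (superstr (p ++ q)).take (superstr p).length =
          α ++ (superstr z).take ((superstr p).length - α.length) := by
        rw [← hαβ, List.take_append, List.take_append,
          List.take_of_length_le hαlt.le]
        have hz0 : (superstr p).length - (α ++ superstr z).length = 0 := by
          simp; omega
        rw [hz0]
        simp
      have hkey : superstr p = α ++ (superstr z).take ((superstr p).length - α.length) :=
        h1.symm.trans h2
      have hvsuf : (superstr z).take ((superstr p).length - α.length) <:+ superstr p :=
        ⟨α, hkey.symm⟩
      have hvpre : (superstr z).take ((superstr p).length - α.length) <+: superstr z :=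
        List.take_prefix _ _
      have hvlen : ((superstr z).take ((superstr p).length - α.length)).length =
          (superstr p).length - α.length := by
        simp only [List.length_take]
        omega
      have hv1 : ((superstr z).take ((superstr p).length - α.length)).length <
          (superstr p).length := by rw [hvlen]; omega
      have hv2 : ((superstr z).take ((superstr p).length - α.length)).length <
          (superstr z).length := by rw [hvlen]; omega
      have hle := le_ov hvsuf hvpre hv1 hv2
      rw [hvlen] at hle
      have hvalid : ValidPairP P p z :=
        ⟨M.hp, hz.1, Or.inr ⟨fun h => (M.old_vals hz).1 h.symm,
          fun h => (M.old_vals hz).2.1 h.symm⟩⟩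
      have hbound := M.hmax p z hvalid
      omega

end MergeCtx


lemma ov_rc_rc (x y : Str) : ov (rc x) y = ov (rc y) x := by
  conv_lhs => rw [← rc_rc y]
  exact ov_rc (rc y) x

lemma ov_rc_rc' (x y : Str) : ov x (rc y) = ov y (rc x) := by
  conv_lhs => rw [← rc_rc x]
  exact ov_rc y (rc x)

namespace MergeCtx

variable {S : Finset Str} {P : Finset (List Str)} {p q : List Str}
variable (M : MergeCtx S P p q)
include M

lemma vpq : ValidPairP P p q := ⟨M.hp, M.hq, Or.inr ⟨M.hne, M.hrc⟩⟩

lemma shared_m_old {z : List Str} (hz : OldZ P p q z) {a b : Str}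
    (ha : a ∈ p ++ q) (hb : b ∈ z) (hab : a = b ∨ a = rc b) : False := by
  rcases List.mem_append.mp ha with h | h
  · rcases M.H.i2 p z M.hp hz.1 a h b hb hab with he | he
    · exact hz.2.1 he.symm
    · apply hz.2.2.1
      have := congrArg rcPath he
      rw [rcPath_rcPath] at this
      exact this.symm
  · rcases M.H.i2 q z M.hq hz.1 a h b hb hab with he | he
    · exact hz.2.2.2.1 he.symm
    · apply hz.2.2.2.2
      have := congrArg rcPath he
      rw [rcPath_rcPath] at this
      exact this.symm

lemma validP'_bound {q₁ q₂ : List Str}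
    (hv : ValidPairP (insert (p ++ q) (P \ {p, rcPath p, q, rcPath q})) q₁ q₂) :
    ov (superstr q₁) (superstr q₂) ≤ ov (superstr p) (superstr q) := by
  obtain ⟨h₁, h₂, hcond⟩ := hv
  rcases M.memP'_elim h₁ with rfl | rfl | hold₁ <;>
    rcases M.memP'_elim h₂ with rfl | rfl | hold₂
  · exact M.B3.1
  · exfalso
    rw [rc_superstr] at hcond
    rcases hcond with he | ⟨-, hne2⟩
    · exact M.sm_ne_rc he
    · exact hne2 rfl
  · exact (M.B1 hold₂).1
  · exfalso
    rcases hcond with he | ⟨-, hne2⟩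
    · rw [rc_superstr] at he
      exact M.sm_ne_rc he.symm
    · rw [rc_superstr, rc_rc] at hne2
      exact hne2 rfl
  · rw [rc_superstr, ov_rc]
    exact M.B3.1
  · rw [rc_superstr, ov_rc_rc, ← rc_superstr]
    exact (M.B2 (M.old_rcPath hold₂)).1
  · exact (M.B2 hold₁).1
  · rw [rc_superstr, ov_rc_rc', ← rc_superstr]
    exact (M.B1 (M.old_rcPath hold₁)).1
  · exact M.hmax q₁ q₂ ⟨hold₁.1, hold₂.1, hcond⟩

lemma edge_m_bound {a b : Str} (hedge : EdgeOf (p ++ q) a b) :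
    ov (superstr p) (superstr q) ≤ ov a b := by
  rcases edgeOf_append hedge with h | h | ⟨-, -, ha, hb⟩
  · exact M.H.i6 p M.hp a b h p q M.vpq
  · exact M.H.i6 q M.hq a b h p q M.vpq
  · rw [ha, hb, ← M.loc]

lemma preserved : GInv S (insert (p ++ q) (P \ {p, rcPath p, q, rcPath q})) := by
  constructor
  · -- i1
    intro z hz
    rcases M.memP'_elim hz with rfl | rfl | hold
    · refine ⟨by simp [M.p_ne_nil], fun a ha => M.mem_m_orig ha⟩
    · refine ⟨by rw [Ne, rcPath_eq_nil_iff]; simp [M.p_ne_nil], fun a ha => ?_⟩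
      rw [mem_rcPath] at ha
      obtain ⟨h1, h2⟩ := M.mem_m_orig ha
      constructor
      · rcases h1 with h | h
        · exact Or.inr h
        · exact Or.inl (by rwa [rc_rc] at h)
      · intro hcon
        exact h2 (by rw [hcon]; rfl)
    · exact M.H.i1 z hold.1
  · -- i2
    intro z₁ z₂ h₁ h₂ a ha b hb hab
    rcases M.memP'_elim h₁ with rfl | rfl | hold₁ <;>
      rcases M.memP'_elim h₂ with rfl | rfl | hold₂
    · exact Or.inl rfl
    · exact Or.inr (rcPath_rcPath _).symm
    · exact (M.shared_m_old hold₂ ha hb hab).elim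
    · exact Or.inr rfl
    · exact Or.inl rfl
    · refine (M.shared_m_old hold₂ (mem_rcPath.mp ha) hb ?_).elim
      rcases hab with he | he
      · exact Or.inr (by rw [he])
      · exact Or.inl (by rw [he, rc_rc])
    · refine (M.shared_m_old hold₁ hb ha ?_).elim
      rcases hab with he | he
      · exact Or.inl he.symm
      · exact Or.inr (by rw [he, rc_rc])
    · refine (M.shared_m_old hold₁ (mem_rcPath.mp hb) ha ?_).elim
      rcases hab with he | he
      · exact Or.inr (by rw [← he])
      · exact Or.inl he.symm
    · exact M.H.i2 z₁ z₂ hold₁.1 hold₂.1 a ha b hb hab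
  · -- i3
    intro z₁ z₂ h₁ h₂ hcond
    rcases M.memP'_elim h₁ with rfl | rfl | hold₁ <;>
      rcases M.memP'_elim h₂ with rfl | rfl | hold₂
    · rw [M.lsS_m, M.hdS_m]
      exact M.B3.2
    · exact absurd (rc_superstr (p ++ q)).symm hcond
    · rw [M.lsS_m]
      exact (M.B1 hold₂).2
    · exact absurd (by rw [rc_superstr, rc_rc]) hcond
    · rw [rc_superstr, lsS_rcPath, hdS_rcPath, M.lsS_m, M.hdS_m, ov_rc, ov_rc]
      exact M.B3.2
    · rw [rc_superstr, lsS_rcPath, M.hdS_m, ov_rc_rc (superstr (p ++ q)) (superstr z₂),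
        ov_rc_rc (hdS p) (hdS z₂), ← rc_superstr, ← lsS_rcPath]
      exact (M.B2 (M.old_rcPath hold₂)).2
    · rw [M.hdS_m]
      exact (M.B2 hold₁).2
    · rw [rc_superstr, hdS_rcPath, M.lsS_m, ov_rc_rc' (superstr z₁) (superstr (p ++ q)),
        ov_rc_rc' (lsS z₁) (lsS q), ← rc_superstr, ← hdS_rcPath]
      exact (M.B1 (M.old_rcPath hold₁)).2
    · exact M.H.i3 z₁ z₂ hold₁.1 hold₂.1 hcond
  · -- i4
    intro z₁ z₂ h₁ h₂ hne12 hnerc12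
    rcases M.memP'_elim h₁ with rfl | rfl | hold₁ <;>
      rcases M.memP'_elim h₂ with rfl | rfl | hold₂
    · exact absurd rfl hne12
    · exact absurd (rcPath_rcPath _).symm hnerc12
    · exact M.notinf_m_old hold₂
    · exact absurd rfl hnerc12
    · exact absurd rfl hne12
    · intro h
      rw [rc_superstr] at h
      have h2 := rc_infix h
      rw [rc_rc, ← rc_superstr] at h2
      exact M.notinf_m_old (M.old_rcPath hold₂) h2
    · exact M.notinf_old_m hold₁
    · intro h
      rw [rc_superstr] at h
      have h2 := rc_infix h
      rw [rc_rc, ← rc_superstr] at h2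
      exact M.notinf_old_m (M.old_rcPath hold₁) h2
    · exact M.H.i4 z₁ z₂ hold₁.1 hold₂.1 hne12 hnerc12
  · -- i6
    intro z hz a b hedge q₁ q₂ hvp
    have hbound := M.validP'_bound hvp
    have hedge_t : ov (superstr p) (superstr q) ≤ ov a b := by
      rcases M.memP'_elim hz with rfl | rfl | hold
      · exact M.edge_m_bound hedge
      · have hedge2 := edgeOf_rcPath hedge
        rw [rcPath_rcPath] at hedge2
        have := M.edge_m_bound hedge2
        rwa [ov_rc] at this
      · exact M.H.i6 z hold.1 a b hedge p q M.vpq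
    exact le_trans hbound hedge_t

end MergeCtx


-- ### restriction to a sub-collection

lemma memP_of_subset {P' P : Finset (List Str)} (hsub : P' ⊆ P) {z : List Str}
    (h : memP P' z) : memP P z :=
  h.imp (fun hh => hsub hh) (fun hh => hsub hh)

lemma validP_of_subset {P' P : Finset (List Str)} (hsub : P' ⊆ P) {a b : List Str}
    (h : ValidPairP P' a b) : ValidPairP P a b :=
  ⟨memP_of_subset hsub h.1, memP_of_subset hsub h.2.1, h.2.2⟩

lemma GInv.subset {S : Finset Str} {P P' : Finset (List Str)} (hsub : P' ⊆ P)
    (H : GInv S P) : GInv S P' := by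
  constructor
  · exact fun z hz => H.i1 z (memP_of_subset hsub hz)
  · exact fun z₁ z₂ h₁ h₂ => H.i2 z₁ z₂ (memP_of_subset hsub h₁) (memP_of_subset hsub h₂)
  · exact fun z₁ z₂ h₁ h₂ => H.i3 z₁ z₂ (memP_of_subset hsub h₁) (memP_of_subset hsub h₂)
  · exact fun z₁ z₂ h₁ h₂ => H.i4 z₁ z₂ (memP_of_subset hsub h₁) (memP_of_subset hsub h₂)
  · exact fun z hz a b he q₁ q₂ hv =>
      H.i6 z (memP_of_subset hsub hz) a b he q₁ q₂ (validP_of_subset hsub hv)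

-- ### initial invariant

lemma init_GInv {S : Finset Str} (hS : SubstrFree S) (hnil : [] ∉ S) :
    GInv S (S.image fun s => [s]) := by
  have hmem : ∀ z, memP (S.image fun s => [s]) z → ∃ a, (a ∈ S ∨ rc a ∈ S) ∧ z = [a] := by
    intro z hz
    rcases hz with hz | hz
    · obtain ⟨s, hs, he⟩ := Finset.mem_image.mp hz
      exact ⟨s, Or.inl hs, he.symm⟩
    · obtain ⟨s, hs, he⟩ := Finset.mem_image.mp hz
      have hze : z = [rc s] := by
        have h2 := congrArg rcPath he
        rw [rcPath_rcPath] at h2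
        rw [← h2]; rfl
      exact ⟨rc s, Or.inr (by rwa [rc_rc]), hze⟩
  constructor
  · intro z hz
    obtain ⟨a, ha, rfl⟩ := hmem z hz
    refine ⟨by simp, fun b hb => ?_⟩
    have hba : b = a := by simpa using hb
    subst hba
    refine ⟨ha, fun hcon => ?_⟩
    subst hcon
    rcases ha with h | h
    · exact hnil h
    · exact hnil (by simpa using h)
  · intro z₁ z₂ h₁ h₂ a ha b hb hab
    obtain ⟨a₁, ha₁, rfl⟩ := hmem z₁ h₁
    obtain ⟨a₂, ha₂, rfl⟩ := hmem z₂ h₂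
    have hea : a = a₁ := by simpa using ha
    have heb : b = a₂ := by simpa using hb
    subst hea; subst heb
    rcases hab with he | he
    · exact Or.inl (by rw [he])
    · exact Or.inr (by rw [he]; rfl)
  · intro z₁ z₂ h₁ h₂ _
    obtain ⟨a₁, -, rfl⟩ := hmem z₁ h₁
    obtain ⟨a₂, -, rfl⟩ := hmem z₂ h₂
    simp only [superstr_singleton, lsS_singleton, hdS_cons]
    exact le_refl _
  · intro z₁ z₂ h₁ h₂ hne hnerc
    obtain ⟨a₁, ha₁, rfl⟩ := hmem z₁ h₁
    obtain ⟨a₂, ha₂, rfl⟩ := hmem z₂ h₂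
    have hne' : a₁ ≠ a₂ := fun h => hne (by rw [h])
    simp only [superstr_singleton]
    exact hS a₁ ha₁ a₂ ha₂ hne'
  · intro z hz a b hedge
    obtain ⟨a₁, -, rfl⟩ := hmem z hz
    obtain ⟨l, r, heq⟩ := hedge
    exfalso
    have := congrArg List.length heq
    simp at this
    omega

-- ### rotation comparison

lemma rotate_length_le {c : List Str} {j : ℕ} (hj1 : 1 ≤ j) (hlt : j < c.length)
    (hkey : ov (lsS c) (hdS c) ≤ ov (lsS (c.take j)) (hdS (c.drop j))) :
    (superstr c).length ≤ (superstr (c.rotate j)).length := by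
  have ht_ne : c.take j ≠ [] := by
    intro h0
    have hl : (c.take j).length = 0 := by rw [h0]; rfl
    rw [List.length_take] at hl
    omega
  have hd_ne : c.drop j ≠ [] := by
    intro h0
    have hl : (c.drop j).length = 0 := by rw [h0]; rfl
    rw [List.length_drop] at hl
    omega
  have hA := length_superstr_append ht_ne hd_ne
  rw [List.take_append_drop] at hA
  have hB := length_superstr_append hd_ne ht_ne
  rw [← List.rotate_eq_drop_append_take hlt.le] at hB
  have h1 : lsS c = lsS (c.drop j) := by
    conv_lhs => rw [← List.take_append_drop j c]
    rw [lsS_append hd_ne]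
  have h2 : hdS c = hdS (c.take j) := by
    conv_lhs => rw [← List.take_append_drop j c]
    rw [hdS_append ht_ne]
  rw [← h1, ← h2] at hB
  linarith [hA, hB, hkey]

-- ### main induction

lemma main_ineq {S : Finset Str} (hS : SubstrFree S) {P C : Finset (List Str)}
    (hex : MGreedyCyc P C) :
    GInv S P → ∀ c ∈ C, ∀ j : ℕ, 1 ≤ j → j ≤ c.length →
      (superstr c).length ≤ (superstr (c.rotate j)).length := by
  induction hex with
  | done =>
    intro _ c hc
    simp at hc
  | close P C p hp hmax h ih =>
    intro H c hc j hj1 hj2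
    rcases Finset.mem_insert.mp hc with rfl | hc'
    · rcases eq_or_lt_of_le hj2 with heq | hlt
      · rw [heq, List.rotate_length]
      · refine rotate_length_le hj1 hlt ?_
        have step1 : ov (lsS c) (hdS c) ≤ ov (superstr c) (superstr c) :=
          ov_mono (lsS_suffix c) (hdS_prefix c) (H.ls_ne_nil hp) (H.hd_ne_nil hp)
        have step2 : ov (superstr c) (superstr c) ≤ ov (lsS (c.take j)) (hdS (c.drop j)) :=
          H.i6 c hp _ _ (edgeOf_take_drop hj1 hlt) c c ⟨hp, hp, Or.inl rfl⟩
        exact le_trans step1 step2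
    · exact ih (H.subset Finset.sdiff_subset) c hc' j hj1 hj2
  | merge P C p q hp hq hne hrc hmax h ih =>
    intro H
    exact ih (MergeCtx.preserved ⟨hS, H, hp, hq, hne, hrc, hmax⟩)

-- ### the degenerate case

lemma nil_case_aux {P C : Finset (List Str)} (hex : MGreedyCyc P C)
    (hP : ∀ z ∈ P, z = [[]]) : ∀ c ∈ C, superstr c = [] := by
  induction hex with
  | done =>
    intro c hc
    simp at hc
  | close P C p hp hmax h ih =>
    intro c hc
    have hp' : p = [([] : Str)] := by
      rcases hp with hh | hh
      · exact hP p hh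
      · have := hP _ hh
        have h2 := congrArg rcPath this
        rw [rcPath_rcPath] at h2
        rw [h2]; rfl
    rcases Finset.mem_insert.mp hc with rfl | hc'
    · rw [hp']; rfl
    · refine ih (fun z hz => hP z (Finset.mem_sdiff.mp hz).1) c hc'
  | merge P C p q hp hq hne hrc hmax h ih =>
    intro c hc
    exfalso
    have hp' : p = [([] : Str)] := by
      rcases hp with hh | hh
      · exact hP p hh
      · have := hP _ hh
        have h2 := congrArg rcPath this
        rw [rcPath_rcPath] at h2
        rw [h2]; rfl
    have hq' : q = [([] : Str)] := by
      rcases hq with hh | hh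
      · exact hP q hh
      · have := hP _ hh
        have h2 := congrArg rcPath this
        rw [rcPath_rcPath] at h2
        rw [h2]; rfl
    rw [hp', hq'] at hne
    exact hne rfl


/-- if for each cycle `p` closed by MGREEDY-RC some rotation of its open
superstring is a suffix of `x p`, then `‖T‖ ≤ ‖A‖`. -/
theorem normT_le_normA
    (S : Finset Str) (hS : SubstrFree S)
    (C : Finset (List Str)) (hex : MGreedyCyc (S.image fun s => [s]) C)
    (x : List Str → Str)
    (hx : ∀ p ∈ C, ∃ j : ℕ, 1 ≤ j ∧ j ≤ p.length ∧ superstr (p.rotate j) <:+ x p) :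
    ∑ p ∈ C, (superstr p).length ≤ ∑ p ∈ C, (x p).length := by
  by_cases hnil : ([] : Str) ∈ S
  · have hall : ∀ y ∈ S, y = [] := by
      intro y hy
      by_contra hne
      exact hS [] (Or.inl hnil) y (Or.inl hy) (fun h => hne h.symm) List.nil_infix
    have hP : ∀ z ∈ S.image (fun s => [s]), z = [([] : Str)] := by
      intro z hz
      obtain ⟨s, hs, rfl⟩ := Finset.mem_image.mp hz
      rw [hall s hs]
    have h0 := nil_case_aux hex hP
    calc ∑ p ∈ C, (superstr p).length
        = ∑ p ∈ C, 0 := Finset.sum_congr rfl (fun c hc => by rw [h0 c hc]; rfl)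
      _ = 0 := by simp
      _ ≤ _ := Nat.zero_le _
  · refine Finset.sum_le_sum fun c hc => ?_
    obtain ⟨j, hj1, hj2, hsuf⟩ := hx c hc
    exact le_trans (main_ineq hS hex (init_GInv hS hnil) c hc j hj1 hj2) hsuf.length_le
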